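/- As p → 0⁺, the ratio t^(D)(N_opt^(D), p) / t^(S)(N_opt^(S), p) converges to √2, where N_opt^(D) and N_opt^(S) are the integer minimizers of t^(D)(·,p) = 1 - (1-p)^N + (1 - p(1-p)^(N-1))/N and t^(S)(·,p) = 2 - (1-p) + (2(1-p) - (1-(1-p)^(N+1))/p)/N respectively. -/

import Mathlib

open Filter

noncomputable def tDn (N : ℕ) (p : ℝ) : ℝ :=
  1 - (1 - p) ^ N + (1 - p * (1 - p) ^ (N - 1)) / (N : ℝ)

noncomputable def tSn (N : ℕ) (p : ℝ) : ℝ :=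
  2 - (1 - p) + (2 * (1 - p) - (1 - (1 - p) ^ (N + 1)) / p) / (N : ℝ)


lemma nn1 (n : ℕ) : 0 ≤ (n:ℝ)*((n:ℝ)-1) := by
  rcases n with _ | m
  · norm_num
  · have h1 : (1:ℝ) ≤ ((m+1:ℕ):ℝ) := by exact_mod_cast Nat.one_le_iff_ne_zero.mpr (by simp)
    nlinarith

lemma nn2 (n : ℕ) : 0 ≤ (n:ℝ)*((n:ℝ)-1)*((n:ℝ)-2) := by
  rcases Nat.lt_or_ge n 2 with h | h
  · interval_cases n <;> norm_num
  · have : (2:ℝ) ≤ (n:ℝ) := by exact_mod_cast h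
    exact mul_nonneg (mul_nonneg (by linarith) (by linarith)) (by linarith)

lemma pow_ge_lin (p : ℝ) (hp : 0 ≤ p) (hp1 : p ≤ 1) (n : ℕ) :
    1 - (n:ℝ)*p ≤ (1 - p)^n := by
  have := one_add_mul_le_pow (a := -p) (by linarith) n
  simpa [sub_eq_add_neg, mul_comm] using this

lemma pow_le_quad (p : ℝ) (hp : 0 ≤ p) (hp1 : p ≤ 1) :
    ∀ n : ℕ, (1 - p)^n ≤ 1 - (n:ℝ)*p + (n:ℝ)*((n:ℝ)-1)/2 * p^2 := by
  intro n
  induction n with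
  | zero => norm_num
  | succ n ih =>
    have h1 : (1 - p)^(n+1) ≤ (1-p) * (1 - (n:ℝ)*p + (n:ℝ)*((n:ℝ)-1)/2 * p^2) := by
      rw [pow_succ (1-p) n, mul_comm ((1-p)^n)]
      exact mul_le_mul_of_nonneg_left ih (show (0:ℝ) ≤ 1-p by linarith)
    have h2 := nn1 n
    push_cast
    nlinarith [mul_nonneg h2 (mul_nonneg hp (mul_nonneg hp hp))]

lemma pow_ge_cubic (p : ℝ) (hp : 0 ≤ p) (hp1 : p ≤ 1) :
    ∀ n : ℕ, 1 - (n:ℝ)*p + (n:ℝ)*((n:ℝ)-1)/2 * p^2 - (n:ℝ)*((n:ℝ)-1)*((n:ℝ)-2)/6 * p^3 ≤ (1 - p)^n := by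
  intro n
  induction n with
  | zero => norm_num
  | succ n ih =>
    have h1 : (1-p) * (1 - (n:ℝ)*p + (n:ℝ)*((n:ℝ)-1)/2 * p^2 - (n:ℝ)*((n:ℝ)-1)*((n:ℝ)-2)/6 * p^3) ≤ (1 - p)^(n+1) := by
      rw [pow_succ (1-p) n, mul_comm ((1-p)^n)]
      exact mul_le_mul_of_nonneg_left ih (show (0:ℝ) ≤ 1-p by linarith)
    have hb : 0 ≤ (n:ℝ)*((n:ℝ)-1)*((n:ℝ)-2)/6 * p^4 := by
      exact mul_nonneg (div_nonneg (nn2 n) (by norm_num)) (by positivity)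
    push_cast
    nlinarith [h1, hb]

lemma pow_mul_le_one (p : ℝ) (hp : 0 ≤ p) (hp1 : p ≤ 1) :
    ∀ n : ℕ, (1 - p)^n * (1 + (n:ℝ)*p) ≤ 1 := by
  intro n
  induction n with
  | zero => norm_num
  | succ n ih =>
    have hq : (0:ℝ) ≤ (1-p)^n := pow_nonneg (by linarith) n
    have key : (1-p) * (1 + ((n:ℝ)+1)*p) ≤ 1 + (n:ℝ)*p := by
      nlinarith [mul_nonneg (Nat.cast_nonneg (α := ℝ) n) (mul_nonneg hp hp)]
    have h2 : (1-p)^(n+1) * (1 + ((n:ℝ)+1)*p) ≤ 1 := by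
      calc (1-p)^(n+1) * (1 + ((n:ℝ)+1)*p) = (1-p)^n * ((1-p) * (1 + ((n:ℝ)+1)*p)) := by ring
        _ ≤ (1-p)^n * (1 + (n:ℝ)*p) := mul_le_mul_of_nonneg_left key hq
        _ ≤ 1 := ih
    push_cast
    exact h2




lemma tDn_up (p : ℝ) (hp : 0 < p) (hp' : p < 1) :
    tDn ⌈1 / Real.sqrt p⌉₊ p ≤ 2 * Real.sqrt p + p := by
  set u := Real.sqrt p with hu
  have hu0 : 0 < u := Real.sqrt_pos.mpr hp
  have hu2 : u^2 = p := Real.sq_sqrt hp.le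
  have hc0 : 0 < 1/u := by positivity
  set n := ⌈1/u⌉₊ with hn
  have hn1 : 1 ≤ n := Nat.one_le_iff_ne_zero.mpr (by
    simp only [hn, ne_eq, Nat.ceil_eq_zero, not_le]; exact hc0)
  have hN1 : (1:ℝ) ≤ (n:ℝ) := by exact_mod_cast hn1
  have hN0 : (0:ℝ) < (n:ℝ) := by linarith
  have hNle : (n:ℝ) < 1/u + 1 := Nat.ceil_lt_add_one hc0.le
  have hNge : 1/u ≤ (n:ℝ) := Nat.le_ceil _
  have hq0 : (0:ℝ) ≤ 1 - p := by linarith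
  have hq1 : (1:ℝ) - p ≤ 1 := by linarith
  have h1 : 1 - (1-p)^n ≤ (n:ℝ)*p := by
    have := pow_ge_lin p hp.le hp'.le n
    linarith
  have h2' : (1 - p * (1-p)^(n-1)) / (n:ℝ) ≤ 1 / (n:ℝ) := by
    have hpow : (0:ℝ) ≤ (1-p)^(n-1) := pow_nonneg hq0 _
    gcongr
    nlinarith
  have h3 : (n:ℝ)*p ≤ u + p := by
    have : (n:ℝ)*p < (1/u + 1)*p := by nlinarith
    have hpu : (1/u)*p = u := by
      field_simp
      nlinarith
    nlinarith
  have h4 : 1/(n:ℝ) ≤ u := by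
    rw [div_le_iff₀ hN0]
    calc (1:ℝ) = u * (1/u) := by field_simp
      _ ≤ u * n := by nlinarith
  have : tDn n p = 1 - (1-p)^n + (1 - p * (1-p)^(n-1)) / (n:ℝ) := rfl
  rw [this]
  linarith



set_option maxHeartbeats 1000000 in
lemma tDn_low (p : ℝ) (hp : 0 < p) (hp' : p < 1/4096) (n : ℕ) (hn : 0 < n) :
    2 * Real.sqrt p * (1 - Real.sqrt (Real.sqrt p)) ≤ tDn n p := by
  have hp1 : p < 1 := by linarith
  set u := Real.sqrt p with hu
  set t := Real.sqrt u with ht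
  have hu0 : 0 < u := Real.sqrt_pos.mpr hp
  have hu2 : u^2 = p := Real.sq_sqrt hp.le
  have ht0 : 0 < t := Real.sqrt_pos.mpr hu0
  have ht2 : t^2 = u := Real.sq_sqrt hu0.le
  have ht4 : t^4 = p := by nlinarith
  have htb : t < 1/8 := by
    by_contra h
    push_neg at h
    have : (1/8:ℝ)^4 ≤ t^4 := by
      apply pow_le_pow_left₀ (by norm_num) h
    rw [ht4] at this
    norm_num at this
    linarith
  have h2t : t^2 ≤ t/8 := by nlinarith
  have h4t : t^4 ≤ t/512 := by nlinarith
  have h5t : (0:ℝ) ≤ t^5 := by positivity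
  have hN1 : (1:ℝ) ≤ (n:ℝ) := by exact_mod_cast hn
  have hN0 : (0:ℝ) < (n:ℝ) := by linarith
  have hq0 : (0:ℝ) ≤ 1 - p := by linarith
  have hq1 : (1:ℝ) - p ≤ 1 := by linarith
  have hpow1 : (0:ℝ) ≤ (1-p)^(n-1) := pow_nonneg hq0 _
  have hpow1' : (1-p)^(n-1) ≤ 1 := pow_le_one₀ hq0 hq1
  have hsecond : (1 - p) / (n:ℝ) ≤ (1 - p * (1-p)^(n-1)) / (n:ℝ) := by
    gcongr
    nlinarith
  have hrw : tDn n p = 1 - (1-p)^n + (1 - p * (1-p)^(n-1)) / (n:ℝ) := rfl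
  have hgoal : 2 * u * (1 - t) = 2*t^2*(1-t) := by rw [← ht2]
  rw [hrw]
  rcases le_or_gt ((n:ℝ)*p) t with hcase | hcase
  · -- small n case
    have hquad := pow_le_quad p hp.le hp1.le n
    have hfirst : (n:ℝ)*p - (n:ℝ)^2*p^2/2 ≤ 1 - (1-p)^n := by nlinarith
    set N := (n:ℝ) with hNdef
    set y := N * t^2 with hy
    have hy0 : 0 < y := by positivity
    have hyt : y * t^2 ≤ t := by
      have : y * t^2 = N * t^4 := by rw [hy]; ring
      rw [this, ht4]; exact hcase
    have haux : (0:ℝ) ≤ (1 - t/2)*(1 - t^4) - (1-t)^2 := by nlinarith [h2t, h4t, h5t]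
    have hhalf : (0:ℝ) < 1 - t/2 := by linarith
    have hkey' : 0 ≤ (1 - t/2) * ((1 - t/2)*y^2 - 2*(1-t)*y + (1 - t^4)) := by
      nlinarith [sq_nonneg ((1-t/2)*y - (1-t)), haux]
    have hkey : 0 ≤ (1 - t/2)*y^2 - 2*(1-t)*y + (1 - t^4) :=
      (mul_nonneg_iff_of_pos_left hhalf).mp hkey'
    have hcube : y^3 * t^2 ≤ y^2 * t := by nlinarith [sq_nonneg y]
    have hstep : 2*(1-t)*y ≤ y^2 - y^3*t^2/2 + (1-t^4) := by nlinarith [hkey, hcube]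
    have e1 : N*p = y*t^2 := by rw [hy, ← ht4]; ring
    have e2 : N^2*p^2 = y^2*t^4 := by rw [hy, ← ht4]; ring
    have e3 : (1-p)/N = (1-t^4)*t^2/y := by
      rw [hy, ← ht4]
      field_simp
    have hfin : 2*t^2*(1-t) ≤ N*p - N^2*p^2/2 + (1-p)/N := by
      rw [e1, e3, ← sub_nonneg]
      have expand : (y*t^2 - N^2*p^2/2 + (1-t^4)*t^2/y) - 2*t^2*(1-t)
          = t^2/y * ((y^2 - y^3*t^2/2 + (1-t^4)) - 2*(1-t)*y) := by
        rw [e2]; field_simp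
      rw [expand]
      apply mul_nonneg (by positivity)
      linarith
    linarith
  · -- large n case
    have hmul := pow_mul_le_one p hp.le hp1.le n
    have hx0 : (0:ℝ) < 1 + (n:ℝ)*p := by positivity
    have hqn : (1-p)^n ≤ 1/(1 + (n:ℝ)*p) := by
      rw [le_div_iff₀ hx0]
      exact hmul
    have h1t : (1-p)^n ≤ 1/(1+t) :=
      hqn.trans (one_div_le_one_div_of_le (by linarith) (by linarith))
    have hfirst : t/2 ≤ 1 - (1-p)^n := by
      have : 1/(1+t) ≤ 1 - t/2 := by
        rw [div_le_iff₀ (by linarith)]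
        nlinarith
      linarith
    have hsec0 : (0:ℝ) ≤ (1 - p * (1-p)^(n-1)) / (n:ℝ) := by
      apply div_nonneg _ hN0.le
      nlinarith
    have htail : 2*t^2*(1-t) ≤ t/2 := by nlinarith [h2t]
    linarith



private lemma keyRub (N p Q : ℝ)
    (hcubic : 1 - (N+1)*p + (N+1)*((N+1)-1)/2 * p^2 - (N+1)*((N+1)-1)*((N+1)-2)/6 * p^3 ≤ Q) :
    1 - Q ≤ ((N+1) - (N+1)*N*p/2 + (N+1)*N*(N-1)*p^2/6) * p := by
  nlinarith

private lemma keyA (t y s : ℝ) (ht0 : 0 < t) (htb : t < 1/8) (hy0 : 0 < y)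
    (hyt : y*t^2 ≤ t) (hs2 : s^2 = 2) (hs1 : 1 ≤ s) (hsu : s ≤ 3/2) :
    0 ≤ 1 - 2*t^4 + (3/2)*(y*t^2) + y^2/2 - y^3*t^2/6 + y*t^6/6 - s*(1-t)*y := by
  have h2t : t^2 ≤ t/8 := by nlinarith
  have h4t : t^4 ≤ t/512 := by nlinarith
  have h5t : (0:ℝ) ≤ t^5 := by positivity
  have hst1 : s^2*t = 2*t := by rw [hs2]
  have hst2 : s^2*t^2 = 2*t^2 := by rw [hs2]
  have haux2 : (0:ℝ) ≤ (1/2 - t/6)*(1 - 2*t^4) - (1-t)^2/2 := by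
    nlinarith [h2t, h4t, h5t]
  have hA : (0:ℝ) < 1/2 - t/6 := by linarith
  have hkey' : 0 ≤ (1/2 - t/6) * ((1/2 - t/6)*y^2 - s*(1-t)*y + (1 - 2*t^4)) := by
    nlinarith [sq_nonneg ((1/2 - t/6)*y - s*(1-t)/2), haux2, hs2, hst1, hst2]
  have hkey : 0 ≤ (1/2 - t/6)*y^2 - s*(1-t)*y + (1 - 2*t^4) :=
    (mul_nonneg_iff_of_pos_left hA).mp hkey'
  have hcube : y^3*t^2/6 ≤ y^2*t/6 := by nlinarith [sq_nonneg y]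
  nlinarith [hkey, hcube, mul_nonneg hy0.le (pow_nonneg ht0.le 6),
    mul_nonneg hy0.le (sq_nonneg t)]

private lemma keyB (t s N p : ℝ) (ht0 : 0 < t) (htb : t < 1/8) (hN1 : 1 ≤ N)
    (hp : 0 < p) (hp' : p < 1/4096) (hcase : t < N*p) (hc32 : N*p ≤ 3/2)
    (hs1 : 1 ≤ s) (hsu : s ≤ 3/2) :
    0 ≤ 1 - 2*p + (3/2)*(N*p) + N^2*p/2 - N^3*p^2/6 + N*p^2/6 - s*t^2*(1-t)*N := by
  have h2t : t^2 ≤ t/8 := by nlinarith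
  have hN0 : (0:ℝ) < N := by linarith
  set x := N*p with hx
  have hx0 : 0 < x := by positivity
  have hmono : t*(3 - t) ≤ x*(3 - x) := by
    nlinarith [mul_nonneg (by linarith : (0:ℝ) ≤ x - t) (by linarith : (0:ℝ) ≤ 3 - x - t)]
  have h2 : t/3 ≤ x/2 - x^2/6 := by nlinarith
  have hterm : N*(t/3) ≤ N*(x/2 - x^2/6) := mul_le_mul_of_nonneg_left h2 hN0.le
  have hterm2 : N*(x/2 - x^2/6) = N^2*p/2 - N^3*p^2/6 := by rw [hx]; ring
  have h3 : s*t^2*(1-t) ≤ t/3 := by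
    nlinarith [h2t, mul_nonneg (by linarith : (0:ℝ) ≤ 3/2 - s) (sq_nonneg t),
      mul_nonneg (by linarith : (0:ℝ) ≤ s) (pow_nonneg ht0.le 3)]
  have h4 : s*t^2*(1-t)*N ≤ (t/3)*N := mul_le_mul_of_nonneg_right h3 hN0.le
  nlinarith [hterm, hterm2.le, hterm2.ge, h4,
    mul_nonneg hN0.le hp.le, mul_nonneg (mul_nonneg hN0.le hp.le) hp.le]

private lemma keyC (t s : ℝ) (ht0 : 0 < t) (htb : t < 1/8)
    (hs1 : 1 ≤ s) (hsu : s ≤ 3/2) : s*t^2*(1-t) ≤ 1/3 := by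
  have h2t : t^2 ≤ t/8 := by nlinarith
  nlinarith [h2t, mul_nonneg (by linarith : (0:ℝ) ≤ 3/2 - s) (sq_nonneg t),
    mul_nonneg (by linarith : (0:ℝ) ≤ s) (pow_nonneg ht0.le 3)]

set_option maxHeartbeats 2000000 in
lemma tSn_low (p : ℝ) (hp : 0 < p) (hp' : p < 1/4096) (n : ℕ) (hn : 0 < n) :
    Real.sqrt 2 * Real.sqrt p * (1 - Real.sqrt (Real.sqrt p)) ≤ tSn n p := by
  have hp1 : p < 1 := by linarith
  set s := Real.sqrt 2 with hs
  have hs0 : 0 < s := Real.sqrt_pos.mpr (by norm_num)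
  have hs2 : s^2 = 2 := Real.sq_sqrt (by norm_num)
  have hs1 : 1 ≤ s := by nlinarith
  have hsu : s ≤ 3/2 := by nlinarith
  set u := Real.sqrt p with hu
  set t := Real.sqrt u with ht
  have hu0 : 0 < u := Real.sqrt_pos.mpr hp
  have hu2 : u^2 = p := Real.sq_sqrt hp.le
  have ht0 : 0 < t := Real.sqrt_pos.mpr hu0
  have ht2 : t^2 = u := Real.sq_sqrt hu0.le
  have ht4 : t^4 = p := by nlinarith
  have htb : t < 1/8 := by
    by_contra h
    push_neg at h
    have : (1/8:ℝ)^4 ≤ t^4 := by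
      apply pow_le_pow_left₀ (by norm_num) h
    rw [ht4] at this
    norm_num at this
    linarith
  have hN1 : (1:ℝ) ≤ (n:ℝ) := by exact_mod_cast hn
  have hN0 : (0:ℝ) < (n:ℝ) := by linarith
  set N := (n:ℝ) with hNd
  have hq0 : (0:ℝ) ≤ 1 - p := by linarith
  set R := (1 - (1-p)^(n+1))/p with hR
  have hrw : tSn n p = 2 - (1-p) + (2*(1-p) - R)/N := rfl
  have hgoal : s * u * (1-t) = s*t^2*(1-t) := by rw [← ht2]
  rw [hrw, hgoal]
  rcases le_or_gt (N*p) (3/2) with hc32 | hc32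
  · -- use the cubic bound
    have hcubic := pow_ge_cubic p hp.le hp1.le (n+1)
    push_cast at hcubic
    have hRub : R ≤ (N+1) - (N+1)*N*p/2 + (N+1)*N*(N-1)*p^2/6 := by
      rw [hR, div_le_iff₀ hp]
      exact keyRub N p ((1-p)^(n+1)) hcubic
    set L := 2 - 2*p - (N+1) + (N+1)*N*p/2 - (N+1)*N*(N-1)*p^2/6 with hL
    have hnum : L ≤ 2*(1-p) - R := by rw [hL]; linarith
    have hdiv : L/N ≤ (2*(1-p) - R)/N := by gcongr
    set E := 1 - 2*p + (3/2)*(N*p) + N^2*p/2 - N^3*p^2/6 + N*p^2/6 - s*t^2*(1-t)*N with hE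
    have hEeq : N*(2 - (1-p) + L/N - s*t^2*(1-t)) = E := by
      rw [hL, hE]
      field_simp
      ring
    suffices hsuf : 0 ≤ E by
      have h0 : 0 ≤ 2 - (1-p) + L/N - s*t^2*(1-t) :=
        (mul_nonneg_iff_of_pos_left hN0).mp (hEeq ▸ hsuf)
      linarith
    rcases le_or_gt (N*p) t with hcase | hcase
    · -- small n
      have hy0 : 0 < N * t^2 := by positivity
      have hyt : (N*t^2) * t^2 ≤ t := by
        have h : (N*t^2) * t^2 = N * t^4 := by ring
        rw [h, ht4]; exact hcase
      have := keyA t (N*t^2) s ht0 htb hy0 hyt hs2 hs1 hsu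
      have hEy : E = 1 - 2*t^4 + (3/2)*((N*t^2)*t^2) + (N*t^2)^2/2 - (N*t^2)^3*t^2/6
          + (N*t^2)*t^6/6 - s*(1-t)*(N*t^2) := by
        rw [hE, ← ht4]
        ring
      rw [hEy]
      linarith [this]
    · -- medium n
      have := keyB t s N p ht0 htb hN1 hp hp' hcase hc32 hs1 hsu
      rw [hE]
      linarith [this]
  · -- very large n : N*p > 3/2
    have hRup : R ≤ 1/p := by
      rw [hR]
      gcongr
      nlinarith [pow_nonneg hq0 (n+1)]
    have h1 : -(1/p) ≤ 2*(1-p) - R := by nlinarith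
    have h2 : (-(1/p))/N ≤ (2*(1-p) - R)/N := by gcongr
    have h3 : (-(1/p))/N = -(1/(p*N)) := by field_simp
    have h4 : 1/(p*N) ≤ 2/3 := by
      rw [div_le_iff₀ (by positivity)]
      nlinarith
    have h5 := keyC t s ht0 htb hs1 hsu
    linarith [h2, h3.le, h3.ge]



open Filter


set_option maxHeartbeats 1000000 in
lemma tSn_up (p : ℝ) (hp : 0 < p) (hp' : p < 1) :
    tSn ⌈Real.sqrt 2 / Real.sqrt p⌉₊ p ≤ Real.sqrt 2 * Real.sqrt p + 2*p := by
  set s := Real.sqrt 2 with hs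
  have hs0 : 0 < s := Real.sqrt_pos.mpr (by norm_num)
  have hs2 : s^2 = 2 := Real.sq_sqrt (by norm_num)
  have hs1 : 1 ≤ s := by nlinarith
  set u := Real.sqrt p with hu
  have hu0 : 0 < u := Real.sqrt_pos.mpr hp
  have hu2 : u^2 = p := Real.sq_sqrt hp.le
  have hc0 : 0 < s/u := by positivity
  set n := ⌈s/u⌉₊ with hn
  have hn1 : 1 ≤ n := Nat.one_le_iff_ne_zero.mpr (by
    simp only [hn, ne_eq, Nat.ceil_eq_zero, not_le]; exact hc0)
  have hN1 : (1:ℝ) ≤ (n:ℝ) := by exact_mod_cast hn1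
  have hN0 : (0:ℝ) < (n:ℝ) := by linarith
  have hNle : (n:ℝ) < s/u + 1 := Nat.ceil_lt_add_one hc0.le
  have hNge : s/u ≤ (n:ℝ) := Nat.le_ceil _
  set N := (n:ℝ) with hNd
  -- bound on R := (1 - q^{n+1})/p
  have hquad := pow_le_quad p hp.le hp'.le (n+1)
  push_cast at hquad
  have hR : (N+1) - (N+1)*N*p/2 ≤ (1 - (1-p)^(n+1))/p := by
    rw [le_div_iff₀ hp]
    nlinarith
  have hnum : 2*(1-p) - (1 - (1-p)^(n+1))/p ≤ 2 - 2*p - (N+1) + (N+1)*N*p/2 := by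
    linarith
  have hdivle : (2*(1-p) - (1 - (1-p)^(n+1))/p) / N ≤ (2 - 2*p - (N+1) + (N+1)*N*p/2) / N := by
    gcongr
  have hexp : (2 - 2*p - (N+1) + (N+1)*N*p/2) / N = (1 - 2*p)/N - 1 + (N+1)*p/2 := by
    field_simp
    ring
  have h1N : (1-2*p)/N ≤ 1/N := by gcongr <;> linarith
  have h1Nu : 1/N ≤ u*s/2 := by
    rw [div_le_iff₀ hN0]
    have h1 : (1:ℝ) = (u*s/2) * (2/(u*s)) := by field_simp
    rw [h1]
    gcongr
    calc 2/(u*s) = s/u := by rw [div_eq_div_iff (by positivity) (by positivity)]; nlinarith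
        _ ≤ N := hNge
  have hNp : N*p/2 ≤ s*u/2 + p/2 := by
    have h2 : N*p < (s/u+1)*p := by nlinarith
    have h3 : (s/u)*p = s*u := by
      field_simp
      nlinarith
    nlinarith
  have hrw : tSn n p = 2 - (1-p) + (2*(1-p) - (1 - (1-p)^(n+1))/p)/N := rfl
  rw [hrw]
  have : 2 - (1-p) + ((1 - 2*p)/N - 1 + (N+1)*p/2) ≤ s*u + 2*p := by
    have : (N+1)*p/2 = N*p/2 + p/2 := by ring
    nlinarith [h1N, h1Nu, hNp]
  nlinarith [hdivle, hexp.le, hexp.ge]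


theorem stmt_19 (ND NS : ℝ → ℕ)
    (hND : ∀ p ∈ Set.Ioo (0:ℝ) 1, 0 < ND p ∧
      ∀ M : ℕ, 0 < M → tDn (ND p) p ≤ tDn M p)
    (hNS : ∀ p ∈ Set.Ioo (0:ℝ) 1, 0 < NS p ∧
      ∀ M : ℕ, 0 < M → tSn (NS p) p ≤ tSn M p) :
    Tendsto (fun p : ℝ => tDn (ND p) p / tSn (NS p) p)
      (nhdsWithin 0 (Set.Ioi 0)) (nhds (Real.sqrt 2)) := by
  set l := nhdsWithin (0:ℝ) (Set.Ioi 0) with hl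
  have hmem : Set.Ioo (0:ℝ) (1/4096) ∈ l :=
    Ioo_mem_nhdsGT_of_mem ⟨le_refl 0, by norm_num⟩
  have hs0 : (0:ℝ) < Real.sqrt 2 := Real.sqrt_pos.mpr (by norm_num)
  have hs2 : Real.sqrt 2 ^ 2 = 2 := Real.sq_sqrt (by norm_num)
  -- sqrt tendsto
  have hsq : Tendsto (fun p : ℝ => Real.sqrt p) l (nhds 0) := by
    have h := Real.continuous_sqrt.tendsto 0
    rw [Real.sqrt_zero] at h
    exact h.mono_left nhdsWithin_le_nhds
  have hsqq : Tendsto (fun p : ℝ => Real.sqrt (Real.sqrt p)) l (nhds 0) := by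
    have h := (Real.continuous_sqrt.comp Real.continuous_sqrt).tendsto 0
    simp only [Function.comp, Real.sqrt_zero] at h
    exact h.mono_left nhdsWithin_le_nhds
  have hlow : Tendsto (fun p : ℝ => 1 - Real.sqrt (Real.sqrt p)) l (nhds 1) := by
    have := hsqq.const_sub 1
    simpa using this
  have hupD : Tendsto (fun p : ℝ => 1 + Real.sqrt p / 2) l (nhds 1) := by
    have := (hsq.div_const 2).const_add 1
    simpa using this
  have hupS : Tendsto (fun p : ℝ => 1 + Real.sqrt 2 * Real.sqrt p) l (nhds 1) := by
    have := (hsq.const_mul (Real.sqrt 2)).const_add 1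
    simpa using this
  -- squeeze for Dorfman ratio
  have hfD : Tendsto (fun p : ℝ => tDn (ND p) p / (2 * Real.sqrt p)) l (nhds 1) := by
    apply tendsto_of_tendsto_of_tendsto_of_le_of_le' hlow hupD
    · filter_upwards [hmem] with p hp
      have hu0 : 0 < Real.sqrt p := Real.sqrt_pos.mpr hp.1
      have h := tDn_low p hp.1 hp.2 (ND p) (hND p ⟨hp.1, by linarith [hp.2]⟩).1
      rw [le_div_iff₀ (by positivity)]
      linarith
    · filter_upwards [hmem] with p hp
      have hu0 : 0 < Real.sqrt p := Real.sqrt_pos.mpr hp.1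
      have hu2 : Real.sqrt p ^ 2 = p := Real.sq_sqrt hp.1.le
      have hcpos : 0 < ⌈1 / Real.sqrt p⌉₊ := Nat.ceil_pos.mpr (by positivity)
      have h1 := (hND p ⟨hp.1, by linarith [hp.2]⟩).2 _ hcpos
      have h2 := tDn_up p hp.1 (by linarith [hp.2])
      rw [div_le_iff₀ (by positivity)]
      nlinarith
  -- squeeze for Sterrett ratio
  have hgS : Tendsto (fun p : ℝ => tSn (NS p) p / (Real.sqrt 2 * Real.sqrt p)) l (nhds 1) := by
    apply tendsto_of_tendsto_of_tendsto_of_le_of_le' hlow hupS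
    · filter_upwards [hmem] with p hp
      have hu0 : 0 < Real.sqrt p := Real.sqrt_pos.mpr hp.1
      have h := tSn_low p hp.1 hp.2 (NS p) (hNS p ⟨hp.1, by linarith [hp.2]⟩).1
      rw [le_div_iff₀ (by positivity)]
      linarith
    · filter_upwards [hmem] with p hp
      have hu0 : 0 < Real.sqrt p := Real.sqrt_pos.mpr hp.1
      have hu2 : Real.sqrt p ^ 2 = p := Real.sq_sqrt hp.1.le
      have hcpos : 0 < ⌈Real.sqrt 2 / Real.sqrt p⌉₊ := Nat.ceil_pos.mpr (by positivity)
      have h1 := (hNS p ⟨hp.1, by linarith [hp.2]⟩).2 _ hcpos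
      have h2 := tSn_up p hp.1 (by linarith [hp.2])
      rw [div_le_iff₀ (by positivity)]
      nlinarith
  -- combine
  have hmain : Tendsto (fun p : ℝ =>
      (tDn (ND p) p / (2 * Real.sqrt p)) / (tSn (NS p) p / (Real.sqrt 2 * Real.sqrt p))
        * Real.sqrt 2) l (nhds (Real.sqrt 2)) := by
    have := (hfD.div hgS one_ne_zero).mul_const (Real.sqrt 2)
    simpa using this
  apply hmain.congr'
  filter_upwards [hmem] with p hp
  have hu0 : 0 < Real.sqrt p := Real.sqrt_pos.mpr hp.1
  have htb : Real.sqrt (Real.sqrt p) < 1 := by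
    have h4 : Real.sqrt (Real.sqrt p) ^ 4 = p := by
      have h2 : Real.sqrt (Real.sqrt p) ^ 2 = Real.sqrt p := Real.sq_sqrt hu0.le
      have hu2 : Real.sqrt p ^ 2 = p := Real.sq_sqrt hp.1.le
      nlinarith
    by_contra h
    push_neg at h
    have h14 := pow_le_pow_left₀ (by norm_num : (0:ℝ) ≤ 1) h 4
    rw [one_pow, h4] at h14
    linarith [hp.2]
  have hSpos : 0 < tSn (NS p) p := by
    have h := tSn_low p hp.1 hp.2 (NS p) (hNS p ⟨hp.1, by linarith [hp.2]⟩).1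
    have : 0 < Real.sqrt 2 * Real.sqrt p * (1 - Real.sqrt (Real.sqrt p)) := by
      apply mul_pos (by positivity)
      linarith
    linarith
  have hSne : tSn (NS p) p ≠ 0 := ne_of_gt hSpos
  field_simp
  linear_combination tDn (ND p) p * hs2
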